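/- Let p-values p1,...,pn consist of n0 ≥ 1 true p-values that are i.i.d. uniform(0,1) and independent of the remaining (arbitrary) false p-values. For the BH step-up test with critical values α_{i:n} = (i/n)α, α ∈ (0,1), let R be the number of rejections and V the number of rejected true p-values. Then E[V / max(R,1)] = (n0/n)·α. -/

import Mathlib

open MeasureTheory ProbabilityTheory Finset
open scoped Classical

/-- number of p-values `≤ t`. -/
noncomputable def countLe {n : ℕ} (p : Fin n → ℝ) (t : ℝ) : ℕ :=
  (Finset.univ.filter fun i => p i ≤ t).card

/-- step-up rejection count: `c i` is the `(i+1)`-th critical value; for nondecreasing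
critical values this equals `max {k : p_{k:n} ≤ c_{k:n}}` (with `max ∅ = 0`). -/
noncomputable def suCount {n : ℕ} (c : Fin n → ℝ) (p : Fin n → ℝ) : ℕ :=
  (Finset.univ.filter fun k : Fin n => k.1 + 1 ≤ countLe p (c k)).sup fun k => k.1 + 1

/-- step-down rejection count. -/
noncomputable def sdCount {n : ℕ} (c : Fin n → ℝ) (p : Fin n → ℝ) : ℕ :=
  (Finset.univ.filter fun k : Fin n =>
    ∀ j : Fin n, j ≤ k → j.1 + 1 ≤ countLe p (c j)).sup fun k => k.1 + 1

/-- the critical value `c_{R:n}`, with the convention `c_{0:n} = 0`. -/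
noncomputable def threshold {n : ℕ} (c : Fin n → ℝ) (R : ℕ) : ℝ :=
  if h : 0 < R ∧ R ≤ n then c ⟨R - 1, by omega⟩ else 0

/-- the σ-algebra generated by `(F̂_n(t))_{t ≥ λ}`. -/
noncomputable def ecdfSigma {Ω : Type*} [MeasurableSpace Ω] {n : ℕ}
    (p : Fin n → Ω → ℝ) (lam : ℝ) : MeasurableSpace Ω :=
  MeasurableSpace.comap
    (fun ω => fun t : Set.Ici lam => (countLe (fun i => p i ω) (t : ℝ) : ℝ))
    MeasurableSpace.pi

section Det
variable {n : ℕ} {c p : Fin n → ℝ}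

lemma suCount_le_n : suCount c p ≤ n := by
  apply Finset.sup_le; intro k _; exact k.2

lemma le_suCount {k : Fin n} (h : k.1 + 1 ≤ countLe p (c k)) : k.1 + 1 ≤ suCount c p :=
  Finset.le_sup (f := fun k : Fin n => k.1 + 1) (Finset.mem_filter.mpr ⟨Finset.mem_univ k, h⟩)

lemma suCount_attained (h : 0 < suCount c p) :
    ∃ k : Fin n, k.1 + 1 = suCount c p ∧ suCount c p ≤ countLe p (c k) := by
  by_cases hne : (Finset.univ.filter fun k : Fin n => k.1 + 1 ≤ countLe p (c k)).Nonempty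
  · obtain ⟨k, hk, hsup⟩ := Finset.exists_mem_eq_sup _ hne (fun k : Fin n => k.1 + 1)
    simp only [Finset.mem_filter] at hk
    refine ⟨k, hsup.symm, ?_⟩
    show (Finset.univ.filter fun k : Fin n => k.1 + 1 ≤ countLe p (c k)).sup
      (fun k : Fin n => k.1 + 1) ≤ _
    rw [hsup]; exact hk.2
  · rw [Finset.not_nonempty_iff_eq_empty] at hne
    rw [suCount, hne] at h; simp at h

lemma countLe_le_countLe_update {i : Fin n} {t : ℝ} (ht : 0 ≤ t) :
    countLe p t ≤ countLe (Function.update p i 0) t := by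
  apply Finset.card_le_card
  intro j hj
  simp only [Finset.mem_filter, Finset.mem_univ, true_and] at hj ⊢
  rcases eq_or_ne j i with rfl | hji
  · simpa [Function.update_self] using ht
  · simpa [Function.update_of_ne hji] using hj

lemma countLe_update_eq {i : Fin n} {t : ℝ} (ht : 0 ≤ t) (hpi : p i ≤ t) :
    countLe (Function.update p i 0) t = countLe p t := by
  unfold countLe
  congr 1
  apply Finset.filter_congr
  intro j _
  rcases eq_or_ne j i with rfl | hji
  · simp [Function.update_self, ht, hpi]
  · simp [Function.update_of_ne hji]

lemma suCount_le_suCount_update {i : Fin n} (hc : ∀ k, 0 ≤ c k) :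
    suCount c p ≤ suCount c (Function.update p i 0) := by
  apply Finset.sup_le
  intro k hk
  simp only [Finset.mem_filter, Finset.mem_univ, true_and] at hk
  exact le_suCount (hk.trans (countLe_le_countLe_update (hc k)))

lemma one_le_suCount_update {i : Fin n} (hc : ∀ k, 0 ≤ c k) :
    1 ≤ suCount c (Function.update p i 0) := by
  have h0 : (0:ℕ) < n := i.pos
  refine le_trans (by norm_num) (le_suCount (k := ⟨0, h0⟩) ?_)
  have : i ∈ Finset.univ.filter fun j => Function.update p i 0 j ≤ c ⟨0, h0⟩ := by
    simp [Function.update_self, hc _]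
  calc (0:ℕ) + 1 = 1 := by ring
  _ ≤ countLe (Function.update p i 0) (c ⟨0, h0⟩) :=
      Finset.card_pos.mpr ⟨i, this⟩

/-- if `p i ≤ c (R'-1)` where `R' = suCount c (update p i 0)`, then `suCount c p = R'`. -/
lemma suCount_eq_of_le (hmono : Monotone c) (hc : ∀ k, 0 ≤ c k) {i : Fin n}
    (h : ∀ k : Fin n, k.1 + 1 = suCount c (Function.update p i 0) → p i ≤ c k) :
    suCount c p = suCount c (Function.update p i 0) := by
  set q := Function.update p i 0 with hq
  have hR' : 0 < suCount c q := one_le_suCount_update hc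
  obtain ⟨k, hk1, hk2⟩ := suCount_attained hR'
  refine le_antisymm (suCount_le_suCount_update hc) ?_
  rw [← hk1]
  apply le_suCount
  rw [← countLe_update_eq (hc k) (h k hk1), ← hq]
  exact hk1 ▸ hk2

/-- if `R ≥ 1` and `p i ≤ c (R - 1)` with `R = suCount c p`, then `suCount c q = R`. -/
lemma suCount_update_le (hmono : Monotone c) (hc : ∀ k, 0 ≤ c k) {i : Fin n}
    (hR : 0 < suCount c p)
    (h : ∀ k : Fin n, k.1 + 1 = suCount c p → p i ≤ c k) :
    suCount c (Function.update p i 0) ≤ suCount c p := by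
  set R := suCount c p with hRdef
  obtain ⟨k0, hk01, _⟩ := suCount_attained hR
  apply Finset.sup_le
  intro k hk
  simp only [Finset.mem_filter, Finset.mem_univ, true_and] at hk
  by_cases hkR : k.1 + 1 ≤ R
  · exact hkR
  · push_neg at hkR
    have hk0k : k0 ≤ k := by
      rw [Fin.le_def]; omega
    have hpik : p i ≤ c k := (h k0 hk01).trans (hmono hk0k)
    rw [countLe_update_eq (hc k) hpik] at hk
    exact le_suCount hk
end Det

section Key
variable {n : ℕ} {c p : Fin n → ℝ} {i : Fin n}

lemma key_identity (hmono : Monotone c) (hcpos : ∀ k, 0 < c k) (T : ℕ → ℝ)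
    (hT0 : ¬ p i ≤ T 0)
    (hTc : ∀ (R : ℕ) (h1 : 0 < R) (h2 : R ≤ n), T R = c ⟨R - 1, by omega⟩) :
    (if p i ≤ T (suCount c p) then (1:ℝ) else 0) / (max (suCount c p) 1 : ℕ)
      = (if p i ≤ T (suCount c (Function.update p i 0)) then (1:ℝ) else 0)
          / (suCount c (Function.update p i 0) : ℕ) := by
  have hc0 : ∀ k, 0 ≤ c k := fun k => (hcpos k).le
  set R := suCount c p with hR
  set R' := suCount c (Function.update p i 0) with hR'
  have hR'1 : 1 ≤ R' := one_le_suCount_update hc0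
  have hR'n : R' ≤ n := suCount_le_n
  by_cases hcond : p i ≤ T R'
  · have hpc : p i ≤ c ⟨R' - 1, by omega⟩ := by rwa [hTc R' hR'1 hR'n] at hcond
    have hRR' : R = R' := by
      apply suCount_eq_of_le hmono hc0
      intro k hk
      have : k = (⟨R' - 1, by omega⟩ : Fin n) := by
        apply Fin.ext; simp only []; omega
      rwa [this]
    rw [hRR', if_pos hcond]
    rw [show R' ⊔ 1 = R' from max_eq_left hR'1]
  · rw [if_neg hcond]
    have : ¬ p i ≤ T R := by
      intro hle
      rcases Nat.eq_zero_or_pos R with h0 | hpos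
      · rw [h0] at hle; exact hT0 hle
      · have hRn : R ≤ n := suCount_le_n
        have hpc : p i ≤ c ⟨R - 1, by omega⟩ := by rwa [hTc R hpos hRn] at hle
        have hle' : R' ≤ R := by
          apply suCount_update_le hmono hc0 hpos
          intro k hk
          have : k = (⟨R - 1, by omega⟩ : Fin n) := by
            apply Fin.ext; simp only []; omega
          rwa [this]
        have hge : R ≤ R' := suCount_le_suCount_update hc0
        exact hcond (by rw [show R' = R by omega]; exact hle)
    rw [if_neg this]
    simp
end Key

section Meas
variable {n : ℕ}

lemma measurable_finset_sup {α : Type*} [MeasurableSpace α] {ι : Type*} (s : Finset ι)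
    (f : ι → α → ℕ) (hf : ∀ i, Measurable (f i)) :
    Measurable (fun a => s.sup (fun i => f i a)) := by
  classical
  induction s using Finset.induction with
  | empty => simpa [Finset.sup_empty] using measurable_const
  | insert _ _ h ih =>
    simp only [Finset.sup_insert]
    exact Measurable.sup (hf _) ih

lemma measurable_countLe (t : ℝ) : Measurable (fun p : Fin n → ℝ => countLe p t) := by
  have : (fun p : Fin n → ℝ => countLe p t)
      = fun p => ∑ i : Fin n, if p i ≤ t then 1 else 0 := by
    funext p
    rw [countLe, Finset.card_filter]
  rw [this]
  apply Finset.measurable_sum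
  intro i _
  exact Measurable.ite (measurableSet_le (measurable_pi_apply i) measurable_const)
    measurable_const measurable_const

lemma measurable_suCount (c : Fin n → ℝ) : Measurable (fun p : Fin n → ℝ => suCount c p) := by
  have heq : (fun p : Fin n → ℝ => suCount c p)
      = fun p => Finset.univ.sup (fun k : Fin n =>
          if k.1 + 1 ≤ countLe p (c k) then k.1 + 1 else 0) := by
    funext p
    unfold suCount
    apply le_antisymm
    · apply Finset.sup_le
      intro k hk
      simp only [Finset.mem_filter, Finset.mem_univ, true_and] at hk
      refine le_trans (le_of_eq (if_pos hk).symm)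
        (Finset.le_sup (f := fun k : Fin n => if k.1 + 1 ≤ countLe p (c k) then k.1 + 1 else 0)
          (Finset.mem_univ k))
    · apply Finset.sup_le
      intro k _
      by_cases hk : k.1 + 1 ≤ countLe p (c k)
      · rw [if_pos hk]
        exact Finset.le_sup (f := fun k : Fin n => k.1 + 1) (Finset.mem_filter.mpr ⟨Finset.mem_univ k, hk⟩)
      · simp [hk]
  rw [heq]
  apply measurable_finset_sup
  intro k
  have : Measurable fun p : Fin n → ℝ => countLe p (c k) := measurable_countLe (c k)
  exact Measurable.ite (measurableSet_le measurable_const this) measurable_const measurable_const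
end Meas

lemma indepFun_prod_of_meas {Ω β γ δ : Type*} [MeasurableSpace Ω]
    [MeasurableSpace β] [MeasurableSpace γ] [MeasurableSpace δ]
    {μ : Measure Ω} [IsProbabilityMeasure μ]
    {X : Ω → β} {Y : Ω → γ} {Z : Ω → δ}
    (hX : Measurable X) (hY : Measurable Y) (hZ : Measurable Z)
    (h : ∀ s t u, MeasurableSet s → MeasurableSet t → MeasurableSet u →
      μ (X ⁻¹' s ∩ (Y ⁻¹' t ∩ Z ⁻¹' u)) = μ (X ⁻¹' s) * μ (Y ⁻¹' t ∩ Z ⁻¹' u)) :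
    IndepFun X (fun ω => (Y ω, Z ω)) μ := by
  have hYZ : Measurable (fun ω => (Y ω, Z ω)) := hY.prodMk hZ
  rw [IndepFun_iff_Indep]
  apply IndepSets.indep (p1 := Set.preimage X '' {s | MeasurableSet s})
    (p2 := Set.preimage (fun ω => (Y ω, Z ω)) ''
      (Set.image2 (· ×ˢ ·) {s | MeasurableSet s} {t | MeasurableSet t}))
  · exact hX.comap_le
  · exact hYZ.comap_le
  · have := MeasurableSpace.isPiSystem_measurableSet (α := β) |>.comap X
    convert this using 1
    rfl
  · have := isPiSystem_prod (α := γ) (β := δ) |>.comap (fun ω => (Y ω, Z ω))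
    convert this using 1
    rfl
  · conv_lhs => rw [← MeasurableSpace.generateFrom_measurableSet (α := β)]
    exact MeasurableSpace.comap_generateFrom
  · conv_lhs => rw [← generateFrom_prod (α := γ) (β := δ)]
    exact MeasurableSpace.comap_generateFrom
  · rw [IndepSets_iff]
    rintro t1 t2 ⟨s, hs, rfl⟩ ⟨r, ⟨t, ht, u, hu, rfl⟩, rfl⟩
    have hpre : (fun ω => (Y ω, Z ω)) ⁻¹' (t ×ˢ u) = Y ⁻¹' t ∩ Z ⁻¹' u := by
      ext ω; simp [Set.mem_prod]
    rw [hpre]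
    exact h s t u hs ht hu

lemma indep_zeroed {Ω : Type*} [MeasurableSpace Ω]
    (μ : Measure Ω) [IsProbabilityMeasure μ] {m : ℕ}
    (H : Fin (m + 1) → Bool) (U ξ : Fin (m + 1) → Ω → ℝ)
    (hUmeas : ∀ i, Measurable (U i)) (hξmeas : ∀ i, Measurable (ξ i))
    (hUindep : iIndepFun U μ)
    (hUξ : IndepFun (fun ω => fun i => U i ω) (fun ω => fun i => ξ i ω) μ)
    (i : Fin (m + 1)) (hi : H i = false) :
    IndepFun (U i)
      (fun ω => Function.update (fun j => if H j then ξ j ω else U j ω) i 0) μ := by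
  set Uvec : Ω → (Fin (m+1) → ℝ) := fun ω => fun j => U j ω with hUvec
  set ξvec : Ω → (Fin (m+1) → ℝ) := fun ω => fun j => ξ j ω with hξvec
  have hUvecM : Measurable Uvec := measurable_pi_lambda _ (fun j => hUmeas j)
  have hξvecM : Measurable ξvec := measurable_pi_lambda _ (fun j => hξmeas j)
  set upd : (Fin (m+1) → ℝ) → (Fin (m+1) → ℝ) := fun v => Function.update v i 0 with hupd
  have hupdM : Measurable upd := by
    apply measurable_pi_lambda
    intro j
    by_cases h : j = i
    · subst h
      simp only [hupd]
      have : (fun v : Fin (m+1) → ℝ => Function.update v j 0 j) = fun _ => (0:ℝ) := by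
        funext v; simp [Function.update_self]
      rw [this]; exact measurable_const
    · have : (fun v : Fin (m+1) → ℝ => Function.update v i 0 j) = fun v => v j := by
        funext v; simp [Function.update_of_ne h]
      simp only [hupd]; rw [this]; exact measurable_pi_apply j
  set Y : Ω → (Fin (m+1) → ℝ) := fun ω => upd (Uvec ω) with hY
  have hYM : Measurable Y := hupdM.comp hUvecM
  -- step (a): IndepFun (U i) Y
  have ha : IndepFun (U i) Y μ := by
    have hd : Disjoint ({i} : Finset (Fin (m+1))) ({i}ᶜ : Finset (Fin (m+1))) :=
      disjoint_compl_right
    have hind := hUindep.indepFun_finset {i} {i}ᶜ hd hUmeas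
    have φM : Measurable (fun v : ({i} : Finset (Fin (m+1))) → ℝ =>
        v ⟨i, Finset.mem_singleton_self i⟩) := measurable_pi_apply _
    have ψM : Measurable (fun v : (({i}ᶜ : Finset (Fin (m+1))) : Finset (Fin (m+1))) → ℝ =>
        (fun j : Fin (m+1) => if h : j = i then 0 else v ⟨j, by simp [h]⟩)) := by
      apply measurable_pi_lambda
      intro j
      by_cases h : j = i
      · simp only [h, dif_pos]; exact measurable_const
      · simp only [h, dif_neg, not_false_iff]; exact measurable_pi_apply _
    have := hind.comp φM ψM
    convert this using 1
    · rfl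
    funext ω
    funext j
    by_cases h : j = i
    · subst h; simp [hY, hupd, Function.update_self, Function.comp]
    · simp [hY, hupd, Function.update_of_ne h, Function.comp, h, hUvec]
  have haM := indepFun_iff_measure_inter_preimage_eq_mul.mp ha
  have hUξM := indepFun_iff_measure_inter_preimage_eq_mul.mp hUξ
  -- step (b): IndepFun (U i) (Y, ξvec)
  have hb : IndepFun (U i) (fun ω => (Y ω, ξvec ω)) μ := by
    apply indepFun_prod_of_meas (hUmeas i) hYM hξvecM
    intro s t u hs ht hu
    have hBmeas : MeasurableSet ((fun v : Fin (m+1) → ℝ => v i) ⁻¹' s ∩ upd ⁻¹' t) :=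
      ((measurable_pi_apply i) hs).inter (hupdM ht)
    have e1 : U i ⁻¹' s ∩ Y ⁻¹' t
        = Uvec ⁻¹' ((fun v : Fin (m+1) → ℝ => v i) ⁻¹' s ∩ upd ⁻¹' t) := by
      ext ω; simp [hY, hUvec, Set.mem_preimage]
    have e2 : Y ⁻¹' t = Uvec ⁻¹' (upd ⁻¹' t) := rfl
    calc μ (U i ⁻¹' s ∩ (Y ⁻¹' t ∩ ξvec ⁻¹' u))
        = μ ((U i ⁻¹' s ∩ Y ⁻¹' t) ∩ ξvec ⁻¹' u) := by rw [Set.inter_assoc]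
      _ = μ (U i ⁻¹' s ∩ Y ⁻¹' t) * μ (ξvec ⁻¹' u) := by
          rw [e1]; exact hUξM _ u hBmeas hu
      _ = (μ (U i ⁻¹' s) * μ (Y ⁻¹' t)) * μ (ξvec ⁻¹' u) := by
          rw [haM s t hs ht]
      _ = μ (U i ⁻¹' s) * (μ (Y ⁻¹' t) * μ (ξvec ⁻¹' u)) := by ring
      _ = μ (U i ⁻¹' s) * μ (Y ⁻¹' t ∩ ξvec ⁻¹' u) := by
          rw [e2]
          rw [hUξM (upd ⁻¹' t) u (hupdM ht) hu]
  -- step (c): compose with G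
  set G : (Fin (m+1) → ℝ) × (Fin (m+1) → ℝ) → (Fin (m+1) → ℝ) :=
    fun vx => fun j => if H j then vx.2 j else vx.1 j with hG
  have hGM : Measurable G := by
    apply measurable_pi_lambda
    intro j
    by_cases h : H j
    · simp only [hG, h, if_true]; exact (measurable_pi_apply j).comp measurable_snd
    · simp only [hG, h, if_false]; exact (measurable_pi_apply j).comp measurable_fst
  have := hb.comp measurable_id hGM
  convert this using 1
  · rfl
  funext ω
  funext j
  by_cases h : j = i
  · subst h
    simp [Function.update_self, Function.comp, hG, hY, hupd, hi]
  · simp [Function.update_of_ne h, Function.comp, hG, hY, hupd, h, hUvec, hξvec]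

lemma core_integral {Ω : Type*} [MeasurableSpace Ω] {μ : Measure Ω} [IsProbabilityMeasure μ]
    {n : ℕ} {X : Ω → ℝ} {Y : Ω → (Fin n → ℝ)}
    (hX : Measurable X) (hY : Measurable Y)
    (hind : IndepFun X Y μ) (hlaw : μ.map X = volume.restrict (Set.Ioo (0:ℝ) 1))
    (r : (Fin n → ℝ) → ℕ) (hr : Measurable r) (hr1 : ∀ y, 1 ≤ r y) (hrn : ∀ y, r y ≤ n)
    {a : ℝ} (ha : a ∈ Set.Ioo (0:ℝ) 1) :
    ∫ ω, (if X ω ≤ (r (Y ω) : ℝ) / n * a then (1:ℝ) else 0) / (r (Y ω) : ℝ) ∂μ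
      = a / n := by
  have hn : 0 < n := (hr1 Classical.ofNonempty).trans (hrn _)
  have hrR : Measurable (fun y => (r y : ℝ)) := measurable_from_top.comp hr
  set f : (Fin n → ℝ) × ℝ → ℝ :=
    fun z => (if z.2 ≤ (r z.1 : ℝ) / n * a then (1:ℝ) else 0) / (r z.1 : ℝ) with hf
  have hfM : Measurable f := by
    apply Measurable.div
    · apply Measurable.ite _ measurable_const measurable_const
      exact measurableSet_le measurable_snd
        (((hrR.comp measurable_fst).div_const _).mul_const _)
    · exact hrR.comp measurable_fst
  have hmap : μ.map (fun ω => (Y ω, X ω)) = (μ.map Y).prod (μ.map X) :=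
    (indepFun_iff_map_prod_eq_prod_map_map hY.aemeasurable hX.aemeasurable).mp hind.symm
  have hmapY : IsProbabilityMeasure (μ.map Y) := Measure.isProbabilityMeasure_map hY.aemeasurable
  have hmapX : IsProbabilityMeasure (μ.map X) := Measure.isProbabilityMeasure_map hX.aemeasurable
  have hint : Integrable f ((μ.map Y).prod (μ.map X)) := by
    apply (integrable_const (1:ℝ)).mono' hfM.aestronglyMeasurable
    filter_upwards with z
    have hrpos : (0:ℝ) < (r z.1 : ℝ) := by exact_mod_cast hr1 z.1
    rw [hf]
    simp only [Real.norm_eq_abs]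
    rw [abs_div, abs_of_nonneg hrpos.le]
    rcases le_or_gt z.2 ((r z.1 : ℝ) / n * a) with h | h
    · rw [if_pos h, abs_one, div_le_one hrpos]
      exact_mod_cast hr1 z.1
    · rw [if_neg (not_le.mpr h), abs_zero, zero_div]
      norm_num
  have step1 : ∫ ω, (if X ω ≤ (r (Y ω) : ℝ) / n * a then (1:ℝ) else 0) / (r (Y ω) : ℝ) ∂μ
      = ∫ z, f z ∂((μ.map Y).prod (μ.map X)) := by
    rw [← hmap, integral_map (hY.prodMk hX).aemeasurable hfM.aestronglyMeasurable]
  rw [step1, integral_prod _ hint]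
  have inner : ∀ y : Fin n → ℝ,
      ∫ x, f (y, x) ∂(μ.map X) = a / n := by
    intro y
    rw [hlaw]
    have hrpos : (0:ℝ) < (r y : ℝ) := by exact_mod_cast hr1 y
    set t : ℝ := (r y : ℝ) / n * a with hT
    have ht0 : 0 < t := by
      apply mul_pos (div_pos hrpos (by exact_mod_cast hn)) ha.1
    have ht1 : t < 1 := by
      have : t ≤ a := by
        rw [hT]
        have h1 : (r y : ℝ) / n ≤ 1 := by
          rw [div_le_one (by exact_mod_cast hn)]
          exact_mod_cast hrn y
        nlinarith [ha.1]
      exact this.trans_lt ha.2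
    have : (fun x => f (y, x))
        = Set.indicator (Set.Iic t) (fun _ => 1 / (r y : ℝ)) := by
      funext x
      rw [hf]
      simp only [Set.indicator, Set.mem_Iic]
      by_cases h : x ≤ t
      · rw [if_pos h, if_pos h]
      · rw [if_neg h, if_neg h, zero_div]
    rw [this, integral_indicator_const _ measurableSet_Iic]
    rw [measureReal_def, Measure.restrict_apply measurableSet_Iic]
    have : Set.Iic t ∩ Set.Ioo (0:ℝ) 1 = Set.Ioc 0 t := by
      ext x
      simp only [Set.mem_inter_iff, Set.mem_Iic, Set.mem_Ioo, Set.mem_Ioc]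
      constructor
      · rintro ⟨h1, h2, h3⟩; exact ⟨h2, h1⟩
      · rintro ⟨h1, h2⟩; exact ⟨h2, h1, h2.trans_lt ht1⟩
    rw [this, Real.volume_Ioc, ENNReal.toReal_ofReal (by linarith)]
    simp only [smul_eq_mul, hT]
    field_simp
    ring
  rw [integral_congr_ae (Filter.Eventually.of_forall inner)]
  simp


set_option maxHeartbeats 1000000 in
/-- Exact BH FDR formula: with `n0 ≥ 1` true p-values that are i.i.d. uniform(0,1) and
independent of the remaining (arbitrary) false p-values, the BH step-up test at level
`α ∈ (0,1)` has `E[V / max(R,1)] = (n0/n)·α`.  Here `H i = false` marks a true null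
hypothesis, `p i = if H i then ξ i else U i`. -/
theorem bh_fdr_exact {Ω : Type*} [MeasurableSpace Ω]
    (μ : Measure Ω) [IsProbabilityMeasure μ] {m : ℕ}
    (H : Fin (m + 1) → Bool) (U ξ : Fin (m + 1) → Ω → ℝ)
    (hUmeas : ∀ i, Measurable (U i)) (hξmeas : ∀ i, Measurable (ξ i))
    (hUindep : iIndepFun U μ)
    (hUξ : IndepFun (fun ω => fun i => U i ω) (fun ω => fun i => ξ i ω) μ)
    (hunif : ∀ i, Measure.map (U i) μ = volume.restrict (Set.Ioo (0 : ℝ) 1))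
    (hξrange : ∀ i ω, ξ i ω ∈ Set.Icc (0 : ℝ) 1)
    (hn0 : 1 ≤ (Finset.univ.filter fun i => H i = false).card)
    (a : ℝ) (ha : a ∈ Set.Ioo (0 : ℝ) 1) :
    ∫ ω,
        (((Finset.univ.filter fun i : Fin (m + 1) =>
            (if H i then ξ i ω else U i ω) ≤
              (suCount (fun k : Fin (m + 1) => ((k.1 + 1 : ℝ) / (m + 1)) * a)
                  (fun i => if H i then ξ i ω else U i ω) : ℝ) / (m + 1) * a
            ∧ H i = false).card : ℝ)
          / (max (suCount (fun k : Fin (m + 1) => ((k.1 + 1 : ℝ) / (m + 1)) * a)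
              (fun i => if H i then ξ i ω else U i ω)) 1 : ℕ)) ∂μ
      = ((Finset.univ.filter fun i => H i = false).card : ℝ) / (m + 1) * a := by
  classical
  set c : Fin (m+1) → ℝ := fun k => ((k.1 + 1 : ℝ) / (m + 1)) * a with hc
  have hm : (0:ℝ) < (m:ℝ) + 1 := by positivity
  have hcmono : Monotone c := by
    intro k l hkl
    have hkl' : (k.1 : ℝ) ≤ l.1 := by exact_mod_cast hkl
    rw [hc]
    simp only []
    gcongr
    exact ha.1.le
  have hcpos : ∀ k, 0 < c k := by
    intro k
    rw [hc]
    have : (0:ℝ) < (k.1 : ℝ) + 1 := by positivity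
    exact mul_pos (div_pos this hm) ha.1
  set pvec : Ω → Fin (m+1) → ℝ := fun ω i => if H i then ξ i ω else U i ω with hpvec
  have hpvecM : Measurable pvec := by
    apply measurable_pi_lambda
    intro i
    by_cases h : H i
    · simpa [hpvec, h] using hξmeas i
    · simpa [hpvec, h] using hUmeas i
  set s : Finset (Fin (m+1)) := Finset.univ.filter (fun i => H i = false) with hs
  set R : Ω → ℕ := fun ω => suCount c (pvec ω) with hR
  have hRM : Measurable R := (measurable_suCount c).comp hpvecM
  -- rewrite the integrand as a finite sum
  have hsum : ∀ ω : Ω,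
      (((Finset.univ.filter fun i : Fin (m + 1) =>
            pvec ω i ≤ (R ω : ℝ) / (m + 1) * a ∧ H i = false).card : ℝ)
          / ((max (R ω) 1 : ℕ) : ℝ))
        = ∑ i ∈ s, (if pvec ω i ≤ (R ω : ℝ) / (m + 1) * a then (1:ℝ) else 0)
            / ((max (R ω) 1 : ℕ) : ℝ) := by
    intro ω
    rw [← Finset.sum_div]
    congr 1
    have h1 : (Finset.univ.filter fun i : Fin (m + 1) =>
          pvec ω i ≤ (R ω : ℝ) / (m + 1) * a ∧ H i = false)
        = s.filter (fun i => pvec ω i ≤ (R ω : ℝ) / (m + 1) * a) := by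
      rw [hs, Finset.filter_filter]
      apply Finset.filter_congr
      intro i _
      tauto
    rw [h1, Finset.card_filter]
    push_cast
    rfl
  -- per-index terms
  have hterm_meas : ∀ i : Fin (m+1), Measurable (fun ω =>
      (if pvec ω i ≤ (R ω : ℝ) / (m + 1) * a then (1:ℝ) else 0)
        / ((max (R ω) 1 : ℕ) : ℝ)) := by
    intro i
    apply Measurable.div
    · apply Measurable.ite _ measurable_const measurable_const
      apply measurableSet_le
      · exact (measurable_pi_apply i).comp hpvecM
      · exact ((measurable_from_top.comp hRM).div_const _).mul_const _
    · exact (measurable_from_top (f := fun k : ℕ => ((max k 1 : ℕ) : ℝ))).comp hRM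
  have hterm_int : ∀ i : Fin (m+1), Integrable (fun ω =>
      (if pvec ω i ≤ (R ω : ℝ) / (m + 1) * a then (1:ℝ) else 0)
        / ((max (R ω) 1 : ℕ) : ℝ)) μ := by
    intro i
    apply (integrable_const (1:ℝ)).mono' (hterm_meas i).aestronglyMeasurable
    filter_upwards with ω
    have hd : (1:ℝ) ≤ ((max (R ω) 1 : ℕ) : ℝ) := by
      exact_mod_cast le_max_right (R ω) 1
    rw [Real.norm_eq_abs, abs_div, abs_of_nonneg (by linarith : (0:ℝ) ≤ ((max (R ω) 1 : ℕ) : ℝ))]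
    by_cases h : pvec ω i ≤ (R ω : ℝ) / (m + 1) * a
    · rw [if_pos h, abs_one, div_le_one (by linarith)]; exact hd
    · rw [if_neg h, abs_zero, zero_div]; norm_num
  -- per-index integral
  have hkey_int : ∀ i ∈ s, ∫ ω,
      (if pvec ω i ≤ (R ω : ℝ) / (m + 1) * a then (1:ℝ) else 0)
        / ((max (R ω) 1 : ℕ) : ℝ) ∂μ = a / (m + 1) := by
    intro i his
    have hi : H i = false := by
      rw [hs] at his
      simpa using (Finset.mem_filter.mp his).2
    -- independence
    set Y : Ω → Fin (m+1) → ℝ := fun ω => Function.update (pvec ω) i 0 with hY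
    have hYM : Measurable Y := by
      apply measurable_pi_lambda
      intro j
      by_cases h : j = i
      · subst h
        simp only [hY, Function.update_self]
        exact measurable_const
      · simp only [hY, Function.update_of_ne h]
        exact (measurable_pi_apply j).comp hpvecM
    have hind : IndepFun (U i) Y μ := by
      have := indep_zeroed μ H U ξ hUmeas hξmeas hUindep hUξ i hi
      exact this
    set r : (Fin (m+1) → ℝ) → ℕ :=
      fun y => max (suCount c (Function.update y i 0)) 1 with hr
    have hrM : Measurable r := by
      have h1 : Measurable (fun y : Fin (m+1) → ℝ => Function.update y i 0) := by
        apply measurable_pi_lambda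
        intro j
        by_cases h : j = i
        · subst h
          simp only [Function.update_self]
          exact measurable_const
        · simp only [Function.update_of_ne h]
          exact measurable_pi_apply j
      exact (measurable_from_top (f := fun k : ℕ => k ⊔ 1)).comp ((measurable_suCount c).comp h1)
    have hr1 : ∀ y, 1 ≤ r y := fun y => le_max_right _ _
    have hrn : ∀ y, r y ≤ m + 1 := by
      intro y
      rw [hr]
      exact max_le suCount_le_n (by omega)
    have hcore := core_integral (μ := μ) (hUmeas i) hYM hind (hunif i) r hrM hr1 hrn ha
    -- identify r (Y ω) with suCount c (update (pvec ω) i 0)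
    have hrY : ∀ ω, r (Y ω) = suCount c (Function.update (pvec ω) i 0) := by
      intro ω
      show suCount c (Function.update (Function.update (pvec ω) i 0) i 0) ⊔ 1
        = suCount c (Function.update (pvec ω) i 0)
      rw [Function.update_idem]
      exact max_eq_left (one_le_suCount_update (fun k => (hcpos k).le))
    -- almost sure positivity of U i
    have hae : ∀ᵐ ω ∂μ, 0 < U i ω := by
      rw [ae_iff]
      have hset : {ω | ¬ 0 < U i ω} = U i ⁻¹' (Set.Iic 0) := by
        ext ω; simp [not_lt]
      rw [hset, ← Measure.map_apply (hUmeas i) measurableSet_Iic, hunif i,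
        Measure.restrict_apply measurableSet_Iic]
      have : Set.Iic (0:ℝ) ∩ Set.Ioo 0 1 = ∅ :=
        Set.eq_empty_iff_forall_notMem.mpr (fun x hx => absurd hx.2.1 (not_lt.mpr hx.1))
      rw [this]
      simp
    -- a.e. pointwise identity
    have hae_eq : ∀ᵐ ω ∂μ,
        (if pvec ω i ≤ (R ω : ℝ) / (m + 1) * a then (1:ℝ) else 0)
          / ((max (R ω) 1 : ℕ) : ℝ)
        = (if U i ω ≤ (r (Y ω) : ℝ) / (m + 1 : ℕ) * a then (1:ℝ) else 0) / (r (Y ω) : ℝ) := by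
      filter_upwards [hae] with ω hω
      have hpi : pvec ω i = U i ω := by simp [hpvec, hi]
      have hT0 : ¬ pvec ω i ≤ (fun R : ℕ => (R:ℝ)/(m+1)*a) 0 := by
        simp only [Nat.cast_zero, zero_div, zero_mul, hpi]
        linarith
      have hTc : ∀ (Rv : ℕ) (h1 : 0 < Rv) (h2 : Rv ≤ m + 1),
          (fun R : ℕ => (R:ℝ)/(m+1)*a) Rv = c ⟨Rv - 1, by omega⟩ := by
        intro Rv h1 h2
        simp only [hc]
        congr 2
        have : Rv - 1 + 1 = Rv := by omega
        exact_mod_cast (congrArg (Nat.cast : ℕ → ℝ) this).symm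
      have hkey := key_identity (p := pvec ω) (i := i) hcmono hcpos
        (fun R : ℕ => (R:ℝ)/(m+1)*a) hT0 hTc
      rw [hR]
      rw [hkey, hrY ω, hpi]
      norm_cast
    rw [integral_congr_ae hae_eq]
    rw [hcore]
    push_cast
    ring
  -- put everything together
  have hinteq : (fun ω =>
      (((Finset.univ.filter fun i : Fin (m + 1) =>
            (if H i then ξ i ω else U i ω) ≤
              (suCount (fun k : Fin (m + 1) => ((k.1 + 1 : ℝ) / (m + 1)) * a)
                  (fun i => if H i then ξ i ω else U i ω) : ℝ) / (m + 1) * a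
            ∧ H i = false).card : ℝ)
          / (max (suCount (fun k : Fin (m + 1) => ((k.1 + 1 : ℝ) / (m + 1)) * a)
              (fun i => if H i then ξ i ω else U i ω)) 1 : ℕ)))
      = fun ω => ∑ i ∈ s, (if pvec ω i ≤ (R ω : ℝ) / (m + 1) * a then (1:ℝ) else 0)
            / ((max (R ω) 1 : ℕ) : ℝ) := by
    funext ω
    rw [← hsum ω]
  rw [hinteq, integral_finset_sum s (fun i _ => hterm_int i),
    Finset.sum_congr rfl hkey_int, Finset.sum_const, nsmul_eq_mul]
  ring
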